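/- Let m ≥ 1, let r ∈ ℂ be a primitive m-th root of unity, let j be an integer with 1 ≤ j ≤ m−1, and let a ∈ ℂ. Then ∑_{s=0}^{m−1} (r^s)^j · ∏_{i=1}^{j−1} (a − r^{−s}·r^i) · ∏_{i=1}^{m−j−1} (a − r^s·r^i) = 0 (each product being 1 when empty). -/

import Mathlib

open Finset

open Polynomial in
/-- The vanishing-sum identity used in the proof of unitarity:
for a primitive `m`-th root of unity `r` and `1 ≤ j ≤ m−1`,
`∑_{s=0}^{m−1} (r^s)^j · ∏_{i=1}^{j−1}(a − r^{−s}r^i) · ∏_{i=1}^{m−j−1}(a − r^s r^i) = 0`. -/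
theorem stmt9 (m : ℕ) (hm : 1 ≤ m) (r : ℂ) (hr : IsPrimitiveRoot r m)
    (j : ℕ) (hj1 : 1 ≤ j) (hj2 : j ≤ m - 1) (a : ℂ) :
    ∑ s ∈ Finset.range m,
        (r ^ s) ^ j * (∏ i ∈ Finset.Icc 1 (j - 1), (a - r ^ (-(s : ℤ)) * r ^ i)) *
          ∏ i ∈ Finset.Icc 1 (m - j - 1), (a - r ^ s * r ^ i) = 0 := by
  have hm2 : 2 ≤ m := by omega
  have hr1 : r ^ m = 1 := hr.pow_eq_one
  have hrne : r ≠ 0 := by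
    intro h
    rw [h, zero_pow (by omega)] at hr1
    exact zero_ne_one hr1
  set A : Polynomial ℂ := ∏ i ∈ Finset.Icc 1 (j-1), (C a * X - C (r ^ i)) with hA_def
  set B : Polynomial ℂ := ∏ i ∈ Finset.Icc 1 (m-j-1), (C a - C (r ^ i) * X) with hB_def
  set Q : Polynomial ℂ := X * A * B with hQ_def
  have hA : A.natDegree ≤ j - 1 := by
    refine le_trans (Polynomial.natDegree_prod_le _ _) ?_
    have h1 : ∑ i ∈ Finset.Icc 1 (j-1), (C a * X - C (r ^ i)).natDegree
        ≤ ∑ i ∈ Finset.Icc 1 (j-1), 1 := by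
      apply Finset.sum_le_sum
      intro i _
      compute_degree
    simpa [Nat.card_Icc] using h1
  have hB : B.natDegree ≤ m - j - 1 := by
    refine le_trans (Polynomial.natDegree_prod_le _ _) ?_
    have h1 : ∑ i ∈ Finset.Icc 1 (m-j-1), (C a - C (r ^ i) * X).natDegree
        ≤ ∑ i ∈ Finset.Icc 1 (m-j-1), 1 := by
      apply Finset.sum_le_sum
      intro i _
      compute_degree
    simpa [Nat.card_Icc] using h1
  have hdeg : Q.natDegree < m := by
    have h1 := Polynomial.natDegree_mul_le (p := X * A) (q := B)
    have h2 := Polynomial.natDegree_mul_le (p := (X : Polynomial ℂ)) (q := A)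
    have hX : (X : Polynomial ℂ).natDegree = 1 := Polynomial.natDegree_X
    rw [← hQ_def] at h1
    omega
  have hterm : ∀ s : ℕ,
      (r ^ s) ^ j * (∏ i ∈ Finset.Icc 1 (j - 1), (a - r ^ (-(s : ℤ)) * r ^ i)) *
          ∏ i ∈ Finset.Icc 1 (m - j - 1), (a - r ^ s * r ^ i) = Q.eval (r ^ s) := by
    intro s
    have hz : r ^ s ≠ 0 := pow_ne_zero _ hrne
    have h1 : r ^ (-(s:ℤ)) = (r ^ s)⁻¹ := by
      rw [zpow_neg, zpow_natCast]
    simp only [hQ_def, hA_def, hB_def, Polynomial.eval_mul, Polynomial.eval_prod,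
      Polynomial.eval_sub, Polynomial.eval_C, Polynomial.eval_X, h1]
    have h2 : ∏ i ∈ Finset.Icc 1 (j - 1), (a - (r ^ s)⁻¹ * r ^ i)
        = ((r ^ s)⁻¹) ^ (j - 1) * ∏ i ∈ Finset.Icc 1 (j - 1), (a * r ^ s - r ^ i) := by
      have hstep : ∏ i ∈ Finset.Icc 1 (j - 1), (a - (r ^ s)⁻¹ * r ^ i)
          = ∏ i ∈ Finset.Icc 1 (j - 1), ((r ^ s)⁻¹ * (a * r ^ s - r ^ i)) := by
        refine Finset.prod_congr rfl (fun i _ => ?_)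
        field_simp
      rw [hstep, Finset.prod_mul_distrib, Finset.prod_const, Nat.card_Icc]
      simp
    rw [h2]
    have h3 : (r ^ s) ^ j * ((r ^ s)⁻¹) ^ (j - 1) = r ^ s := by
      have : (r ^ s) ^ j = (r ^ s) ^ (j - 1) * r ^ s := by
        rw [← pow_succ]
        congr 1
        omega
      rw [this, inv_pow]
      field_simp
    calc (r ^ s) ^ j * (((r ^ s)⁻¹) ^ (j-1) * ∏ i ∈ Finset.Icc 1 (j - 1), (a * r ^ s - r ^ i)) *
          ∏ i ∈ Finset.Icc 1 (m - j - 1), (a - r ^ s * r ^ i)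
        = ((r ^ s) ^ j * ((r ^ s)⁻¹) ^ (j-1)) * (∏ i ∈ Finset.Icc 1 (j - 1), (a * r ^ s - r ^ i)) *
          ∏ i ∈ Finset.Icc 1 (m - j - 1), (a - r ^ s * r ^ i) := by ring
      _ = r ^ s * (∏ i ∈ Finset.Icc 1 (j - 1), (a * r ^ s - r ^ i)) *
          ∏ i ∈ Finset.Icc 1 (m - j - 1), (a - r ^ s * r ^ i) := by rw [h3]
      _ = r ^ s * (∏ i ∈ Finset.Icc 1 (j - 1), (a * r ^ s - r ^ i)) *
          ∏ i ∈ Finset.Icc 1 (m - j - 1), (a - r ^ i * r ^ s) := by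
            congr 1
            exact Finset.prod_congr rfl (fun i _ => by ring)
  calc ∑ s ∈ Finset.range m,
        (r ^ s) ^ j * (∏ i ∈ Finset.Icc 1 (j - 1), (a - r ^ (-(s : ℤ)) * r ^ i)) *
          ∏ i ∈ Finset.Icc 1 (m - j - 1), (a - r ^ s * r ^ i)
      = ∑ s ∈ Finset.range m, Q.eval (r ^ s) :=
        Finset.sum_congr rfl (fun s _ => hterm s)
    _ = ∑ s ∈ Finset.range m, ∑ k ∈ Finset.range m, Q.coeff k * (r ^ s) ^ k := by
        refine Finset.sum_congr rfl (fun s _ => ?_)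
        exact Polynomial.eval_eq_sum_range' hdeg _
    _ = ∑ k ∈ Finset.range m, Q.coeff k * ∑ s ∈ Finset.range m, (r ^ k) ^ s := by
        rw [Finset.sum_comm]
        refine Finset.sum_congr rfl (fun k _ => ?_)
        rw [Finset.mul_sum]
        refine Finset.sum_congr rfl (fun s _ => ?_)
        rw [← pow_mul, ← pow_mul, mul_comm s k]
    _ = 0 := by
        refine Finset.sum_eq_zero (fun k hk => ?_)
        rcases Nat.eq_zero_or_pos k with hk0 | hk0
        · subst hk0
          simp [hQ_def, Polynomial.mul_coeff_zero]
        · have hne : r ^ k ≠ 1 := hr.pow_ne_one_of_pos_of_lt hk0.ne' (Finset.mem_range.mp hk)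
          have hsum : ∑ s ∈ Finset.range m, (r ^ k) ^ s = 0 := by
            rw [geom_sum_eq hne m, ← pow_mul, mul_comm, pow_mul, hr1, one_pow, sub_self,
              zero_div]
          rw [hsum, mul_zero]
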